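/- arXiv:1210.5650 — 6 statements merged into one kernel-verified Lean document; each statement's English description precedes it below -/
import Mathlib

section
/- Let X be a semisimplicial set satisfying the Kan condition. Then there exist functions T_j : X_n → X_{n+2}, defined for all n ≥ 0 and 0 ≤ j ≤ n, satisfying: (a) d_i ∘ T_j = T_{j-1} ∘ d_{i-1} whenever 0 < i < j+1; (b) d_i ∘ T_j = T_j ∘ d_{i-2} whenever i > j+2; (c) d_{j+1} ∘ T_j = d_{j+2} ∘ T_j for all j; and (d) d_0(d_{j+1}(T_j x)) = x for all j and all x. -/
/-- A semisimplicial set: a sequence of sets `X n` together with face maps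
`d i : X (n+1) → X n` (for `0 ≤ i ≤ n+1`) satisfying `d i ∘ d j = d (j-1) ∘ d i` for `i < j`. -/
structure SemisimplicialSet where
  X : ℕ → Type
  d : (n : ℕ) → ℕ → X (n + 1) → X n
  face_comm : ∀ (n i j : ℕ), i < j → j ≤ n + 2 → ∀ x : X (n + 2),
    d n i (d (n + 1) j x) = d n (j - 1) (d (n + 1) i x)

/-- The Kan condition: every consistent collection of `n+1` of the `n+2` faces of a
potential `(n+1)`-simplex (all except the `k`-th) can be filled. -/
def SemisimplicialSet.Kan (S : SemisimplicialSet) : Prop :=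
  (∀ k : ℕ, k ≤ 1 → ∀ x : ℕ → S.X 0,
      ∃ y : S.X 1, ∀ i : ℕ, i ≤ 1 → i ≠ k → S.d 0 i y = x i) ∧
  (∀ n k : ℕ, k ≤ n + 2 → ∀ x : ℕ → S.X (n + 1),
      (∀ i j : ℕ, i < j → j ≤ n + 2 → i ≠ k → j ≠ k →
        S.d n i (x j) = S.d n (j - 1) (x i)) →
      ∃ y : S.X (n + 2), ∀ i : ℕ, i ≤ n + 2 → i ≠ k → S.d (n + 1) i y = x i)

namespace KanTProof

variable {S : SemisimplicialSet}

/-- Face swap, additive form. -/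
lemma dd (S : SemisimplicialSet) (n i k : ℕ) (hik : i ≤ k) (hk : k + 1 ≤ n + 2)
    (x : S.X (n + 2)) :
    S.d n i (S.d (n + 1) (k + 1) x) = S.d n k (S.d (n + 1) i x) := by
  have h := S.face_comm n i (k + 1) (by omega) hk x
  simpa using h

noncomputable def fill2 (S : SemisimplicialSet) (hK : S.Kan) (n k : ℕ) (hk : k ≤ n + 2)
    (f : ℕ → S.X (n + 1))
    (hf : ∀ i j, i < j → j ≤ n + 2 → i ≠ k → j ≠ k →
      S.d n i (f j) = S.d n (j - 1) (f i)) : S.X (n + 2) :=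
  (hK.2 n k hk f hf).choose

lemma fill2_spec (S : SemisimplicialSet) (hK : S.Kan) (n k : ℕ) (hk : k ≤ n + 2)
    (f : ℕ → S.X (n + 1))
    (hf : ∀ i j, i < j → j ≤ n + 2 → i ≠ k → j ≠ k →
      S.d n i (f j) = S.d n (j - 1) (f i)) :
    ∀ i, i ≤ n + 2 → i ≠ k → S.d (n + 1) i (fill2 S hK n k hk f hf) = f i :=
  (hK.2 n k hk f hf).choose_spec

/-- The two-level invariant. -/
def Inv (S : SemisimplicialSet) (n : ℕ) (t : ℕ → S.X n → S.X (n + 2))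
    (t' : ℕ → S.X (n + 1) → S.X (n + 3)) : Prop :=
  (∀ i j : ℕ, 0 < i → i < j + 1 → j ≤ n + 1 → ∀ x : S.X (n + 1),
      S.d (n + 2) i (t' j x) = t (j - 1) (S.d n (i - 1) x)) ∧
  (∀ i j : ℕ, j + 2 < i → i ≤ n + 3 → ∀ x : S.X (n + 1),
      S.d (n + 2) i (t' j x) = t j (S.d n (i - 2) x)) ∧
  (∀ j : ℕ, j ≤ n → ∀ x : S.X n,
      S.d (n + 1) (j + 1) (t j x) = S.d (n + 1) (j + 2) (t j x)) ∧
  (∀ j : ℕ, j ≤ n + 1 → ∀ x : S.X (n + 1),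
      S.d (n + 2) (j + 1) (t' j x) = S.d (n + 2) (j + 2) (t' j x)) ∧
  (∀ j : ℕ, j ≤ n → ∀ x : S.X n,
      S.d n 0 (S.d (n + 1) (j + 1) (t j x)) = x) ∧
  (∀ j : ℕ, j ≤ n + 1 → ∀ x : S.X (n + 1),
      S.d (n + 1) 0 (S.d (n + 2) (j + 1) (t' j x)) = x)

end KanTProof
namespace KanTProof

/-! ### Level 0 -/

noncomputable def V0 (S : SemisimplicialSet) (hK : S.Kan) (x : S.X 0) : S.X 1 :=
  (hK.1 1 le_rfl (fun _ => x)).choose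

lemma V0_spec (S : SemisimplicialSet) (hK : S.Kan) (x : S.X 0) :
    S.d 0 0 (V0 S hK x) = x :=
  (hK.1 1 le_rfl (fun _ => x)).choose_spec 0 (by omega) (by omega)

noncomputable def t0 (S : SemisimplicialSet) (hK : S.Kan) : ℕ → S.X 0 → S.X 2 :=
  fun _ x => fill2 S hK 0 0 (by omega) (fun _ => V0 S hK x)
    (by
      intro i m him hm hi hm'
      have : i = 1 ∧ m = 2 := by omega
      obtain ⟨rfl, rfl⟩ := this
      rfl)

lemma t0_spec (S : SemisimplicialSet) (hK : S.Kan) (j : ℕ) (x : S.X 0) :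
    ∀ i, i ≤ 2 → i ≠ 0 → S.d 1 i (t0 S hK j x) = V0 S hK x :=
  fill2_spec S hK 0 0 (by omega) _ _

lemma t0_C (S : SemisimplicialSet) (hK : S.Kan) (j : ℕ) (hj : j ≤ 0) (x : S.X 0) :
    S.d 1 (j + 1) (t0 S hK j x) = S.d 1 (j + 2) (t0 S hK j x) := by
  interval_cases j
  rw [t0_spec S hK 0 x 1 (by omega) (by omega), t0_spec S hK 0 x 2 (by omega) (by omega)]

lemma t0_D (S : SemisimplicialSet) (hK : S.Kan) (j : ℕ) (hj : j ≤ 0) (x : S.X 0) :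
    S.d 0 0 (S.d 1 (j + 1) (t0 S hK j x)) = x := by
  interval_cases j
  rw [t0_spec S hK 0 x 1 (by omega) (by omega), V0_spec]

end KanTProof
namespace KanTProof

/-! ### Level 1 -/

section Level1
variable (S : SemisimplicialSet) (hK : S.Kan)

noncomputable def V10 (x : S.X 1) : S.X 2 :=
  fill2 S hK 0 1 (by omega)
    (fun i => if i = 2 then S.d 1 1 (t0 S hK 0 (S.d 0 1 x)) else x)
    (by
      intro i m him hm hi hm'
      have : i = 0 ∧ m = 2 := by omega
      obtain ⟨rfl, rfl⟩ := this
      simpa using t0_D S hK 0 le_rfl (S.d 0 1 x))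

lemma V10_spec0 (x : S.X 1) : S.d 1 0 (V10 S hK x) = x :=
  fill2_spec S hK 0 1 _ _ _ 0 (by omega) (by omega)

lemma V10_spec2 (x : S.X 1) : S.d 1 2 (V10 S hK x) = S.d 1 1 (t0 S hK 0 (S.d 0 1 x)) :=
  fill2_spec S hK 0 1 _ _ _ 2 (by omega) (by omega)

noncomputable def T10 (x : S.X 1) : S.X 3 :=
  fill2 S hK 1 0 (by omega)
    (fun i => if i = 3 then t0 S hK 0 (S.d 0 1 x) else V10 S hK x)
    (by
      intro i m him hm hi hm'
      have h3 : (i = 1 ∧ m = 2) ∨ (i = 1 ∧ m = 3) ∨ (i = 2 ∧ m = 3) := by omega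
      rcases h3 with ⟨rfl, rfl⟩ | ⟨rfl, rfl⟩ | ⟨rfl, rfl⟩
      · rfl
      · show S.d 1 1 (t0 S hK 0 (S.d 0 1 x)) = S.d 1 2 (V10 S hK x)
        rw [V10_spec2]
      · show S.d 1 2 (t0 S hK 0 (S.d 0 1 x)) = S.d 1 2 (V10 S hK x)
        rw [V10_spec2]
        exact (t0_C S hK 0 le_rfl (S.d 0 1 x)).symm)

lemma T10_spec (x : S.X 1) : ∀ i, i ≤ 3 → i ≠ 0 →
    S.d 2 i (T10 S hK x) = if i = 3 then t0 S hK 0 (S.d 0 1 x) else V10 S hK x :=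
  fill2_spec S hK 1 0 _ _ _

noncomputable def V11 (x : S.X 1) : S.X 2 :=
  fill2 S hK 0 2 (by omega)
    (fun i => if i = 1 then S.d 1 1 (t0 S hK 0 (S.d 0 0 x)) else x)
    (by
      intro i m him hm hi hm'
      have : i = 0 ∧ m = 1 := by omega
      obtain ⟨rfl, rfl⟩ := this
      simpa using t0_D S hK 0 le_rfl (S.d 0 0 x))

lemma V11_spec0 (x : S.X 1) : S.d 1 0 (V11 S hK x) = x :=
  fill2_spec S hK 0 2 _ _ _ 0 (by omega) (by omega)

lemma V11_spec1 (x : S.X 1) : S.d 1 1 (V11 S hK x) = S.d 1 1 (t0 S hK 0 (S.d 0 0 x)) :=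
  fill2_spec S hK 0 2 _ _ _ 1 (by omega) (by omega)

noncomputable def T11 (x : S.X 1) : S.X 3 :=
  fill2 S hK 1 0 (by omega)
    (fun i => if i = 1 then t0 S hK 0 (S.d 0 0 x) else V11 S hK x)
    (by
      intro i m him hm hi hm'
      have h3 : (i = 1 ∧ m = 2) ∨ (i = 1 ∧ m = 3) ∨ (i = 2 ∧ m = 3) := by omega
      rcases h3 with ⟨rfl, rfl⟩ | ⟨rfl, rfl⟩ | ⟨rfl, rfl⟩
      · show S.d 1 1 (V11 S hK x) = S.d 1 1 (t0 S hK 0 (S.d 0 0 x))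
        rw [V11_spec1]
      · show S.d 1 1 (V11 S hK x) = S.d 1 2 (t0 S hK 0 (S.d 0 0 x))
        rw [V11_spec1]
        exact t0_C S hK 0 le_rfl (S.d 0 0 x)
      · rfl)

lemma T11_spec (x : S.X 1) : ∀ i, i ≤ 3 → i ≠ 0 →
    S.d 2 i (T11 S hK x) = if i = 1 then t0 S hK 0 (S.d 0 0 x) else V11 S hK x :=
  fill2_spec S hK 1 0 _ _ _

noncomputable def t1 : ℕ → S.X 1 → S.X 3 :=
  fun j x => if j = 0 then T10 S hK x else T11 S hK x

lemma inv01 : Inv S 0 (t0 S hK) (t1 S hK) := by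
  refine ⟨?_, ?_, t0_C S hK, ?_, t0_D S hK, ?_⟩
  · intro i j hi hij hj x
    have : i = 1 ∧ j = 1 := by omega
    obtain ⟨rfl, rfl⟩ := this
    show S.d 2 1 (T11 S hK x) = t0 S hK 0 (S.d 0 0 x)
    rw [T11_spec S hK x 1 (by omega) (by omega)]
    norm_num
  · intro i j hij hi x
    have : i = 3 ∧ j = 0 := by omega
    obtain ⟨rfl, rfl⟩ := this
    show S.d 2 3 (t1 S hK 0 x) = t0 S hK 0 (S.d 0 1 x)
    show S.d 2 3 (T10 S hK x) = t0 S hK 0 (S.d 0 1 x)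
    rw [T10_spec S hK x 3 (by omega) (by omega)]
    norm_num
  · intro j hj x
    interval_cases j
    · show S.d 2 1 (T10 S hK x) = S.d 2 2 (T10 S hK x)
      rw [T10_spec S hK x 1 (by omega) (by omega), T10_spec S hK x 2 (by omega) (by omega)]
      norm_num
    · show S.d 2 2 (T11 S hK x) = S.d 2 3 (T11 S hK x)
      rw [T11_spec S hK x 2 (by omega) (by omega), T11_spec S hK x 3 (by omega) (by omega)]
      norm_num
  · intro j hj x
    interval_cases j
    · show S.d 1 0 (S.d 2 1 (T10 S hK x)) = x
      rw [T10_spec S hK x 1 (by omega) (by omega)]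
      exact V10_spec0 S hK x
    · show S.d 1 0 (S.d 2 2 (T11 S hK x)) = x
      rw [T11_spec S hK x 2 (by omega) (by omega)]
      exact V11_spec0 S hK x

end Level1
end KanTProof
namespace KanTProof

section Step
variable (S : SemisimplicialSet) (hK : S.Kan) (n : ℕ)
  (t : ℕ → S.X n → S.X (n + 2)) (t' : ℕ → S.X (n + 1) → S.X (n + 3))

/-- faces of the auxiliary horn producing `V j x`. -/
def fV (j : ℕ) (x : S.X (n + 2)) : ℕ → S.X (n + 2) := fun i =>
  if 1 ≤ i ∧ i ≤ j then S.d (n + 2) j (t' (j - 1) (S.d (n + 1) (i - 1) x))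
  else if j + 2 ≤ i ∧ i ≤ n + 3 then S.d (n + 2) (j + 1) (t' j (S.d (n + 1) (i - 1) x))
  else x

lemma fV_zero (j : ℕ) (x : S.X (n + 2)) : fV S n t' j x 0 = x := by
  rw [fV, if_neg (by omega), if_neg (by omega)]

lemma fV_lo (j i : ℕ) (h1 : 1 ≤ i) (h2 : i ≤ j) (x : S.X (n + 2)) :
    fV S n t' j x i = S.d (n + 2) j (t' (j - 1) (S.d (n + 1) (i - 1) x)) := by
  rw [fV, if_pos ⟨h1, h2⟩]

lemma fV_hi (j i : ℕ) (h1 : j + 2 ≤ i) (h2 : i ≤ n + 3) (x : S.X (n + 2)) :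
    fV S n t' j x i = S.d (n + 2) (j + 1) (t' j (S.d (n + 1) (i - 1) x)) := by
  rw [fV, if_neg (by omega), if_pos ⟨h1, h2⟩]

variable (hA : ∀ i j : ℕ, 0 < i → i < j + 1 → j ≤ n + 1 → ∀ x : S.X (n + 1),
    S.d (n + 2) i (t' j x) = t (j - 1) (S.d n (i - 1) x))
  (hB : ∀ i j : ℕ, j + 2 < i → i ≤ n + 3 → ∀ x : S.X (n + 1),
    S.d (n + 2) i (t' j x) = t j (S.d n (i - 2) x))
  (hC0 : ∀ j : ℕ, j ≤ n → ∀ x : S.X n,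
    S.d (n + 1) (j + 1) (t j x) = S.d (n + 1) (j + 2) (t j x))
  (hC1 : ∀ j : ℕ, j ≤ n + 1 → ∀ x : S.X (n + 1),
    S.d (n + 2) (j + 1) (t' j x) = S.d (n + 2) (j + 2) (t' j x))
  (hD1 : ∀ j : ℕ, j ≤ n + 1 → ∀ x : S.X (n + 1),
    S.d (n + 1) 0 (S.d (n + 2) (j + 1) (t' j x)) = x)

include hA hB hC0 hC1 hD1 in
lemma hfV (j : ℕ) (hj : j ≤ n + 2) (x : S.X (n + 2)) :
    ∀ i m, i < m → m ≤ n + 3 → i ≠ j + 1 → m ≠ j + 1 →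
      S.d (n + 1) i (fV S n t' j x m) = S.d (n + 1) (m - 1) (fV S n t' j x i) := by
  intro i m him hm hi1 hm1
  by_cases hi0 : i = 0
  · subst hi0
    rw [fV_zero]
    by_cases hmj : m ≤ j
    · -- case V1 : 1 ≤ m ≤ j
      obtain ⟨j', rfl⟩ : ∃ j', j = j' + 1 := ⟨j - 1, by omega⟩
      obtain ⟨m', rfl⟩ : ∃ m', m = m' + 1 := ⟨m - 1, by omega⟩
      rw [fV_lo S n t' _ _ (by omega) (by omega)]
      simp only [Nat.add_sub_cancel]
      exact hD1 j' (by omega) _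
    · -- case V2 : j + 2 ≤ m
      obtain ⟨m', rfl⟩ : ∃ m', m = m' + 1 := ⟨m - 1, by omega⟩
      rw [fV_hi S n t' _ _ (by omega) (by omega)]
      simp only [Nat.add_sub_cancel]
      exact hD1 j (by omega) _
  · by_cases hij : i ≤ j
    · by_cases hmj : m ≤ j
      · -- case V3 : 1 ≤ i < m ≤ j
        obtain ⟨i', rfl⟩ : ∃ i', i = i' + 1 := ⟨i - 1, by omega⟩
        obtain ⟨m', rfl⟩ : ∃ m', m = m' + 2 := ⟨m - 2, by omega⟩
        obtain ⟨j', rfl⟩ : ∃ j', j = j' + 2 := ⟨j - 2, by omega⟩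
        rw [fV_lo S n t' _ _ (by omega) (by omega), fV_lo S n t' _ _ (by omega) (by omega)]
        simp only [Nat.add_sub_cancel, show ∀ a : ℕ, a + 2 - 1 = a + 1 from fun _ => rfl]
        have hL : S.d (n + 1) (i' + 1)
            (S.d (n + 2) (j' + 2) (t' (j' + 1) (S.d (n + 1) (m' + 1) x)))
            = S.d (n + 1) (j' + 1) (t j' (S.d n m' (S.d (n + 1) i' x))) := by
          rw [show j' + 2 = (j' + 1) + 1 from rfl,
            dd S (n + 1) (i' + 1) (j' + 1) (by omega) (by omega)]
          rw [hA (i' + 1) (j' + 1) (by omega) (by omega) (by omega)]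
          simp only [Nat.add_sub_cancel]
          rw [show m' + 1 = m' + 1 from rfl, dd S n i' m' (by omega) (by omega)]
        rw [hL]
        by_cases hmj2 : m' + 2 < j' + 2
        · rw [show j' + 2 = (j' + 1) + 1 from rfl,
            dd S (n + 1) (m' + 1) (j' + 1) (by omega) (by omega)]
          rw [hA (m' + 1) (j' + 1) (by omega) (by omega) (by omega)]
          simp only [Nat.add_sub_cancel]
        · have hmj3 : m' = j' := by omega
          subst hmj3
          rw [hC1 (m' + 1) (by omega)]
          rw [show m' + 1 + 2 = (m' + 2) + 1 from rfl,
            dd S (n + 1) (m' + 1) (m' + 2) (by omega) (by omega)]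
          rw [hA (m' + 1) (m' + 1) (by omega) (by omega) (by omega)]
          simp only [Nat.add_sub_cancel]
          rw [hC0 m' (by omega)]
      · -- case V4 : 1 ≤ i ≤ j < j + 2 ≤ m
        obtain ⟨i', rfl⟩ : ∃ i', i = i' + 1 := ⟨i - 1, by omega⟩
        obtain ⟨m'', rfl⟩ : ∃ m'', m = m'' + 2 := ⟨m - 2, by omega⟩
        obtain ⟨j', rfl⟩ : ∃ j', j = j' + 1 := ⟨j - 1, by omega⟩
        rw [fV_hi S n t' _ _ (by omega) (by omega), fV_lo S n t' _ _ (by omega) (by omega)]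
        simp only [Nat.add_sub_cancel, show ∀ a : ℕ, a + 2 - 1 = a + 1 from fun _ => rfl]
        -- LHS
        rw [show j' + 1 + 1 = (j' + 1) + 1 from rfl,
          dd S (n + 1) (i' + 1) (j' + 1) (by omega) (by omega)]
        rw [hA (i' + 1) (j' + 1) (by omega) (by omega) (by omega)]
        simp only [Nat.add_sub_cancel]
        rw [show m'' + 1 = m'' + 1 from rfl, dd S n i' m'' (by omega) (by omega)]
        -- RHS
        rw [show m'' + 1 = (m'' + 1 : ℕ) from rfl,
          ← dd S (n + 1) (j' + 1) (m'' + 1) (by omega) (by omega)]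
        rw [show m'' + 1 + 1 = m'' + 2 from rfl, hB (m'' + 2) j' (by omega) (by omega)]
        simp only [show ∀ a : ℕ, a + 2 - 2 = a from fun _ => rfl]
    · -- case V5 : j + 2 ≤ i < m
      have hi2 : j + 2 ≤ i := by omega
      obtain ⟨i', rfl⟩ : ∃ i', i = i' + 1 := ⟨i - 1, by omega⟩
      obtain ⟨m'', rfl⟩ : ∃ m'', m = m'' + 2 := ⟨m - 2, by omega⟩
      rw [fV_hi S n t' _ _ (by omega) (by omega), fV_hi S n t' _ _ (by omega) (by omega)]
      simp only [Nat.add_sub_cancel, show ∀ a : ℕ, a + 2 - 1 = a + 1 from fun _ => rfl]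
      -- LHS
      rw [show i' + 1 = (i' + 1 : ℕ) from rfl,
        ← dd S (n + 1) (j + 1) (i' + 1) (by omega) (by omega)]
      rw [show i' + 1 + 1 = i' + 2 from rfl, hB (i' + 2) j (by omega) (by omega)]
      simp only [show ∀ a : ℕ, a + 2 - 2 = a from fun _ => rfl]
      rw [dd S n i' m'' (by omega) (by omega)]
      -- RHS
      rw [← dd S (n + 1) (j + 1) (m'' + 1) (by omega) (by omega)]
      rw [show m'' + 1 + 1 = m'' + 2 from rfl, hB (m'' + 2) j (by omega) (by omega)]
      simp only [show ∀ a : ℕ, a + 2 - 2 = a from fun _ => rfl]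

end Step
end KanTProof
namespace KanTProof

section Step2
variable (S : SemisimplicialSet) (hK : S.Kan) (n : ℕ)
  (t : ℕ → S.X n → S.X (n + 2)) (t' : ℕ → S.X (n + 1) → S.X (n + 3))
  (hA : ∀ i j : ℕ, 0 < i → i < j + 1 → j ≤ n + 1 → ∀ x : S.X (n + 1),
    S.d (n + 2) i (t' j x) = t (j - 1) (S.d n (i - 1) x))
  (hB : ∀ i j : ℕ, j + 2 < i → i ≤ n + 3 → ∀ x : S.X (n + 1),
    S.d (n + 2) i (t' j x) = t j (S.d n (i - 2) x))
  (hC0 : ∀ j : ℕ, j ≤ n → ∀ x : S.X n,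
    S.d (n + 1) (j + 1) (t j x) = S.d (n + 1) (j + 2) (t j x))
  (hC1 : ∀ j : ℕ, j ≤ n + 1 → ∀ x : S.X (n + 1),
    S.d (n + 2) (j + 1) (t' j x) = S.d (n + 2) (j + 2) (t' j x))
  (hD1 : ∀ j : ℕ, j ≤ n + 1 → ∀ x : S.X (n + 1),
    S.d (n + 1) 0 (S.d (n + 2) (j + 1) (t' j x)) = x)

noncomputable def V (j : ℕ) (hj : j ≤ n + 2) (x : S.X (n + 2)) : S.X (n + 3) :=
  fill2 S hK (n + 1) (j + 1) (by omega) (fV S n t' j x)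
    (hfV S n t t' hA hB hC0 hC1 hD1 j hj x)

lemma V_spec (j : ℕ) (hj : j ≤ n + 2) (x : S.X (n + 2)) :
    ∀ i, i ≤ n + 3 → i ≠ j + 1 →
      S.d (n + 2) i (V S hK n t t' hA hB hC0 hC1 hD1 j hj x) = fV S n t' j x i :=
  fill2_spec S hK (n + 1) (j + 1) _ _ _

/-- faces of the horn producing `T j x` at the next level. -/
noncomputable def fT (j : ℕ) (hj : j ≤ n + 2) (x : S.X (n + 2)) : ℕ → S.X (n + 3) := fun i =>
  if 1 ≤ i ∧ i ≤ j then t' (j - 1) (S.d (n + 1) (i - 1) x)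
  else if j + 3 ≤ i ∧ i ≤ n + 4 then t' j (S.d (n + 1) (i - 2) x)
  else V S hK n t t' hA hB hC0 hC1 hD1 j hj x

lemma fT_lo (j : ℕ) (hj : j ≤ n + 2) (x : S.X (n + 2)) (i : ℕ) (h1 : 1 ≤ i) (h2 : i ≤ j) :
    fT S hK n t t' hA hB hC0 hC1 hD1 j hj x i = t' (j - 1) (S.d (n + 1) (i - 1) x) := by
  rw [fT, if_pos ⟨h1, h2⟩]

lemma fT_hi (j : ℕ) (hj : j ≤ n + 2) (x : S.X (n + 2)) (i : ℕ) (h1 : j + 3 ≤ i)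
    (h2 : i ≤ n + 4) :
    fT S hK n t t' hA hB hC0 hC1 hD1 j hj x i = t' j (S.d (n + 1) (i - 2) x) := by
  rw [fT, if_neg (by omega), if_pos ⟨h1, h2⟩]

lemma fT_mid (j : ℕ) (hj : j ≤ n + 2) (x : S.X (n + 2)) (i : ℕ)
    (h1 : j + 1 ≤ i) (h2 : i ≤ j + 2) :
    fT S hK n t t' hA hB hC0 hC1 hD1 j hj x i
      = V S hK n t t' hA hB hC0 hC1 hD1 j hj x := by
  rw [fT, if_neg (by omega), if_neg (by omega)]

lemma hfT (j : ℕ) (hj : j ≤ n + 2) (x : S.X (n + 2)) :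
    ∀ i m, i < m → m ≤ n + 4 → i ≠ 0 → m ≠ 0 →
      S.d (n + 2) i (fT S hK n t t' hA hB hC0 hC1 hD1 j hj x m)
        = S.d (n + 2) (m - 1) (fT S hK n t t' hA hB hC0 hC1 hD1 j hj x i) := by
  intro i m him hm hi0 hm0
  by_cases hij : i ≤ j
  · -- i ∈ [1, j]
    obtain ⟨i', rfl⟩ : ∃ i', i = i' + 1 := ⟨i - 1, by omega⟩
    rw [fT_lo S hK n t t' hA hB hC0 hC1 hD1 j hj x (i' + 1) (by omega) (by omega)]
    by_cases hmj : m ≤ j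
    · -- case T1
      obtain ⟨m', rfl⟩ : ∃ m', m = m' + 2 := ⟨m - 2, by omega⟩
      obtain ⟨j₂, rfl⟩ : ∃ j₂, j = j₂ + 2 := ⟨j - 2, by omega⟩
      rw [fT_lo S hK n t t' hA hB hC0 hC1 hD1 (j₂ + 2) hj x (m' + 2) (by omega) (by omega)]
      simp only [Nat.add_sub_cancel, show ∀ a : ℕ, a + 2 - 1 = a + 1 from fun _ => rfl]
      rw [hA (i' + 1) (j₂ + 1) (by omega) (by omega) (by omega),
        hA (m' + 1) (j₂ + 1) (by omega) (by omega) (by omega)]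
      simp only [Nat.add_sub_cancel]
      rw [dd S n i' m' (by omega) (by omega)]
    · by_cases hmj2 : m ≤ j + 2
      · -- case T2 : m = j + 1 or j + 2
        obtain ⟨j', rfl⟩ : ∃ j', j = j' + 1 := ⟨j - 1, by omega⟩
        rw [fT_mid S hK n t t' hA hB hC0 hC1 hD1 (j' + 1) hj x m (by omega) (by omega)]
        rcases (by omega : m = j' + 2 ∨ m = j' + 3) with rfl | rfl
        · rw [V_spec S hK n t t' hA hB hC0 hC1 hD1 (j' + 1) hj x (i' + 1) (by omega)
            (by omega)]
          rw [fV_lo S n t' (j' + 1) (i' + 1) (by omega) (by omega)]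
          simp only [Nat.add_sub_cancel, show ∀ a : ℕ, a + 2 - 1 = a + 1 from fun _ => rfl]
        · rw [V_spec S hK n t t' hA hB hC0 hC1 hD1 (j' + 1) hj x (i' + 1) (by omega)
            (by omega)]
          rw [fV_lo S n t' (j' + 1) (i' + 1) (by omega) (by omega)]
          simp only [Nat.add_sub_cancel, show ∀ a : ℕ, a + 3 - 1 = a + 2 from fun _ => rfl]
          exact hC1 j' (by omega) _
      · -- case T3 : m ≥ j + 3
        obtain ⟨m₄, rfl⟩ : ∃ m₄, m = m₄ + 3 := ⟨m - 3, by omega⟩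
        obtain ⟨j', rfl⟩ : ∃ j', j = j' + 1 := ⟨j - 1, by omega⟩
        rw [fT_hi S hK n t t' hA hB hC0 hC1 hD1 (j' + 1) hj x (m₄ + 3) (by omega) (by omega)]
        simp only [Nat.add_sub_cancel, show ∀ a : ℕ, a + 3 - 1 = a + 2 from fun _ => rfl,
          show ∀ a : ℕ, a + 3 - 2 = a + 1 from fun _ => rfl]
        rw [hA (i' + 1) (j' + 1) (by omega) (by omega) (by omega)]
        simp only [Nat.add_sub_cancel]
        rw [dd S n i' m₄ (by omega) (by omega)]
        rw [hB (m₄ + 2) j' (by omega) (by omega)]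
        simp only [show ∀ a : ℕ, a + 2 - 2 = a from fun _ => rfl]
  · by_cases hij2 : i ≤ j + 2
    · -- i = j + 1 or j + 2
      rw [fT_mid S hK n t t' hA hB hC0 hC1 hD1 j hj x i (by omega) (by omega)]
      by_cases hmj2 : m ≤ j + 2
      · -- case T4 : i = j + 1, m = j + 2
        have h1 : i = j + 1 ∧ m = j + 2 := by omega
        obtain ⟨rfl, rfl⟩ := h1
        rw [fT_mid S hK n t t' hA hB hC0 hC1 hD1 j hj x (j + 2) (by omega) (by omega)]
        simp only [show ∀ a : ℕ, a + 2 - 1 = a + 1 from fun _ => rfl]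
      · -- case T5 : m ≥ j + 3
        obtain ⟨m₃, rfl⟩ : ∃ m₃, m = m₃ + 2 := ⟨m - 2, by omega⟩
        rw [fT_hi S hK n t t' hA hB hC0 hC1 hD1 j hj x (m₃ + 2) (by omega) (by omega)]
        simp only [show ∀ a : ℕ, a + 2 - 1 = a + 1 from fun _ => rfl,
          show ∀ a : ℕ, a + 2 - 2 = a from fun _ => rfl]
        rw [V_spec S hK n t t' hA hB hC0 hC1 hD1 j hj x (m₃ + 1) (by omega) (by omega)]
        rw [fV_hi S n t' j (m₃ + 1) (by omega) (by omega)]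
        simp only [Nat.add_sub_cancel]
        rcases (by omega : i = j + 1 ∨ i = j + 2) with rfl | rfl
        · rfl
        · exact (hC1 j (by omega) _).symm
    · -- case T6 : j + 3 ≤ i < m
      obtain ⟨i₃, rfl⟩ : ∃ i₃, i = i₃ + 2 := ⟨i - 2, by omega⟩
      obtain ⟨m₄, rfl⟩ : ∃ m₄, m = m₄ + 3 := ⟨m - 3, by omega⟩
      rw [fT_hi S hK n t t' hA hB hC0 hC1 hD1 j hj x (m₄ + 3) (by omega) (by omega),
        fT_hi S hK n t t' hA hB hC0 hC1 hD1 j hj x (i₃ + 2) (by omega) (by omega)]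
      simp only [show ∀ a : ℕ, a + 3 - 1 = a + 2 from fun _ => rfl,
        show ∀ a : ℕ, a + 3 - 2 = a + 1 from fun _ => rfl,
        show ∀ a : ℕ, a + 2 - 2 = a from fun _ => rfl]
      rw [hB (i₃ + 2) j (by omega) (by omega)]
      simp only [show ∀ a : ℕ, a + 2 - 2 = a from fun _ => rfl]
      rw [dd S n i₃ m₄ (by omega) (by omega)]
      rw [hB (m₄ + 2) j (by omega) (by omega)]
      simp only [show ∀ a : ℕ, a + 2 - 2 = a from fun _ => rfl]

end Step2
end KanTProof
namespace KanTProof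

section Step3
variable (S : SemisimplicialSet) (hK : S.Kan) (n : ℕ)
  (t : ℕ → S.X n → S.X (n + 2)) (t' : ℕ → S.X (n + 1) → S.X (n + 3))
  (hA : ∀ i j : ℕ, 0 < i → i < j + 1 → j ≤ n + 1 → ∀ x : S.X (n + 1),
    S.d (n + 2) i (t' j x) = t (j - 1) (S.d n (i - 1) x))
  (hB : ∀ i j : ℕ, j + 2 < i → i ≤ n + 3 → ∀ x : S.X (n + 1),
    S.d (n + 2) i (t' j x) = t j (S.d n (i - 2) x))
  (hC0 : ∀ j : ℕ, j ≤ n → ∀ x : S.X n,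
    S.d (n + 1) (j + 1) (t j x) = S.d (n + 1) (j + 2) (t j x))
  (hC1 : ∀ j : ℕ, j ≤ n + 1 → ∀ x : S.X (n + 1),
    S.d (n + 2) (j + 1) (t' j x) = S.d (n + 2) (j + 2) (t' j x))
  (hD1 : ∀ j : ℕ, j ≤ n + 1 → ∀ x : S.X (n + 1),
    S.d (n + 1) 0 (S.d (n + 2) (j + 1) (t' j x)) = x)

noncomputable def TnextAux (j : ℕ) (hj : j ≤ n + 2) (x : S.X (n + 2)) : S.X (n + 4) :=
  fill2 S hK (n + 2) 0 (by omega) (fT S hK n t t' hA hB hC0 hC1 hD1 j hj x)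
    (hfT S hK n t t' hA hB hC0 hC1 hD1 j hj x)

lemma TnextAux_spec (j : ℕ) (hj : j ≤ n + 2) (x : S.X (n + 2)) :
    ∀ i, i ≤ n + 4 → i ≠ 0 →
      S.d (n + 3) i (TnextAux S hK n t t' hA hB hC0 hC1 hD1 j hj x)
        = fT S hK n t t' hA hB hC0 hC1 hD1 j hj x i :=
  fill2_spec S hK (n + 2) 0 _ _ _

noncomputable def Tnext (j : ℕ) (x : S.X (n + 2)) : S.X (n + 4) :=
  if hj : j ≤ n + 2 then TnextAux S hK n t t' hA hB hC0 hC1 hD1 j hj x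
  else TnextAux S hK n t t' hA hB hC0 hC1 hD1 (n + 2) le_rfl x

lemma Tnext_spec (j : ℕ) (hj : j ≤ n + 2) (x : S.X (n + 2)) :
    ∀ i, i ≤ n + 4 → i ≠ 0 →
      S.d (n + 3) i (Tnext S hK n t t' hA hB hC0 hC1 hD1 j x)
        = fT S hK n t t' hA hB hC0 hC1 hD1 j hj x i := by
  rw [Tnext, dif_pos hj]
  exact TnextAux_spec S hK n t t' hA hB hC0 hC1 hD1 j hj x

include hA hB hC0 hC1 hD1 in
lemma step_inv : Inv S (n + 1) t' (Tnext S hK n t t' hA hB hC0 hC1 hD1) := by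
  refine ⟨?_, ?_, hC1, ?_, hD1, ?_⟩
  · -- A at level n+1
    intro i j hi hij hj x
    obtain ⟨i', rfl⟩ : ∃ i', i = i' + 1 := ⟨i - 1, by omega⟩
    rw [Tnext_spec S hK n t t' hA hB hC0 hC1 hD1 j hj x (i' + 1) (by omega) (by omega)]
    rw [fT_lo S hK n t t' hA hB hC0 hC1 hD1 j hj x (i' + 1) (by omega) (by omega)]
  · -- B at level n+1
    intro i j hij hi x
    obtain ⟨i', rfl⟩ : ∃ i', i = i' + 3 := ⟨i - 3, by omega⟩
    rw [Tnext_spec S hK n t t' hA hB hC0 hC1 hD1 j (by omega) x (i' + 3) (by omega)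
      (by omega)]
    rw [fT_hi S hK n t t' hA hB hC0 hC1 hD1 j (by omega) x (i' + 3) (by omega) (by omega)]
  · -- C at level n+1
    intro j hj x
    rw [Tnext_spec S hK n t t' hA hB hC0 hC1 hD1 j (by omega) x (j + 1) (by omega)
      (by omega),
      Tnext_spec S hK n t t' hA hB hC0 hC1 hD1 j (by omega) x (j + 2) (by omega) (by omega)]
    rw [fT_mid S hK n t t' hA hB hC0 hC1 hD1 j (by omega) x (j + 1) (by omega) (by omega),
      fT_mid S hK n t t' hA hB hC0 hC1 hD1 j (by omega) x (j + 2) (by omega) (by omega)]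
  · -- D at level n+1
    intro j hj x
    rw [Tnext_spec S hK n t t' hA hB hC0 hC1 hD1 j (by omega) x (j + 1) (by omega)
      (by omega)]
    rw [fT_mid S hK n t t' hA hB hC0 hC1 hD1 j (by omega) x (j + 1) (by omega) (by omega)]
    rw [V_spec S hK n t t' hA hB hC0 hC1 hD1 j (by omega) x 0 (by omega) (by omega)]
    rw [fV_zero]

end Step3
end KanTProof
namespace KanTProof

noncomputable def tower (S : SemisimplicialSet) (hK : S.Kan) :
    (n : ℕ) → Σ' (t : ℕ → S.X n → S.X (n + 2)) (t' : ℕ → S.X (n + 1) → S.X (n + 3)),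
      Inv S n t t'
  | 0 => ⟨t0 S hK, t1 S hK, inv01 S hK⟩
  | (n + 1) =>
    ⟨(tower S hK n).2.1,
      Tnext S hK n (tower S hK n).1 (tower S hK n).2.1
        (tower S hK n).2.2.1 (tower S hK n).2.2.2.1 (tower S hK n).2.2.2.2.1
        (tower S hK n).2.2.2.2.2.1 (tower S hK n).2.2.2.2.2.2.2,
      step_inv S hK n (tower S hK n).1 (tower S hK n).2.1
        (tower S hK n).2.2.1 (tower S hK n).2.2.2.1 (tower S hK n).2.2.2.2.1
        (tower S hK n).2.2.2.2.2.1 (tower S hK n).2.2.2.2.2.2.2⟩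

noncomputable def TT (S : SemisimplicialSet) (hK : S.Kan) (n : ℕ) :
    ℕ → S.X n → S.X (n + 2) :=
  (tower S hK n).1

lemma tower_succ_fst (S : SemisimplicialSet) (hK : S.Kan) (n : ℕ) :
    (tower S hK (n + 1)).1 = (tower S hK n).2.1 := by
  rw [tower]

lemma inv_T (S : SemisimplicialSet) (hK : S.Kan) (n : ℕ) :
    Inv S n (TT S hK n) (TT S hK (n + 1)) := by
  have h := (tower S hK n).2.2
  rw [TT, TT, tower_succ_fst]
  exact h

end KanTProof

/-- A semisimplicial set satisfying the Kan condition admits operators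
`T j : X n → X (n+2)` (for `0 ≤ j ≤ n`) satisfying properties (a)–(d). -/
theorem kan_semisimplicial_has_T (S : SemisimplicialSet) (hK : S.Kan) :
    ∃ T : (n : ℕ) → ℕ → S.X n → S.X (n + 2),
      (∀ (n i j : ℕ), 0 < i → i < j + 1 → j ≤ n + 1 → ∀ x : S.X (n + 1),
          S.d (n + 2) i (T (n + 1) j x) = T n (j - 1) (S.d n (i - 1) x)) ∧
      (∀ (n i j : ℕ), j + 2 < i → i ≤ n + 3 → ∀ x : S.X (n + 1),
          S.d (n + 2) i (T (n + 1) j x) = T n j (S.d n (i - 2) x)) ∧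
      (∀ (n j : ℕ), j ≤ n → ∀ x : S.X n,
          S.d (n + 1) (j + 1) (T n j x) = S.d (n + 1) (j + 2) (T n j x)) ∧
      (∀ (n j : ℕ), j ≤ n → ∀ x : S.X n,
          S.d n 0 (S.d (n + 1) (j + 1) (T n j x)) = x) := by
  refine ⟨KanTProof.TT S hK, ?_, ?_, ?_, ?_⟩
  · intro n i j hi hij hj x
    exact (KanTProof.inv_T S hK n).1 i j hi hij hj x
  · intro n i j hij hi x
    exact (KanTProof.inv_T S hK n).2.1 i j hij hi x
  · intro n j hj x
    exact (KanTProof.inv_T S hK n).2.2.1 j hj x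
  · intro n j hj x
    exact (KanTProof.inv_T S hK n).2.2.2.2.1 j hj x
end

section
/- Let X be a semisimplicial set equipped with functions T_j : X_n → X_{n+2} (for all n ≥ 0 and 0 ≤ j ≤ n) satisfying: (a) d_i ∘ T_j = T_{j-1} ∘ d_{i-1} whenever 0 < i < j+1; (b) d_i ∘ T_j = T_j ∘ d_{i-2} whenever i > j+2; (c) d_{j+1} ∘ T_j = d_{j+2} ∘ T_j; and (d) d_0(d_{j+1}(T_j x)) = x for all j and x. Fix x ∈ X_n and 0 ≤ k ≤ n, and for each j with 0 ≤ j ≤ n+1 and j ≠ k+1 define y_j ∈ X_n by: y_0 = x; y_j = d_k(T_{k-1}(d_{j-1} x)) if 0 < j < k+1; and y_j = d_{k+1}(T_k(d_{j-1} x)) if j > k+1. Then d_i y_j = d_{j-1} y_i whenever i < j with i ≠ k+1 and j ≠ k+1. -/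
/-- Properties (a)–(d) of the auxiliary operators `T_j : X n → X (n+2)`. -/
def Tprops (S : SemisimplicialSet) (T : (n : ℕ) → ℕ → S.X n → S.X (n + 2)) : Prop :=
  (∀ (n i j : ℕ), 0 < i → i < j + 1 → j ≤ n + 1 → ∀ x : S.X (n + 1),
      S.d (n + 2) i (T (n + 1) j x) = T n (j - 1) (S.d n (i - 1) x)) ∧
  (∀ (n i j : ℕ), j + 2 < i → i ≤ n + 3 → ∀ x : S.X (n + 1),
      S.d (n + 2) i (T (n + 1) j x) = T n j (S.d n (i - 2) x)) ∧
  (∀ (n j : ℕ), j ≤ n → ∀ x : S.X n,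
      S.d (n + 1) (j + 1) (T n j x) = S.d (n + 1) (j + 2) (T n j x)) ∧
  (∀ (n j : ℕ), j ≤ n → ∀ x : S.X n,
      S.d n 0 (S.d (n + 1) (j + 1) (T n j x)) = x)

/-- Lemma 4 of the paper: the prescribed faces `y j` of the first auxiliary horn
are Kan-compatible. -/
theorem first_horn_compatible (S : SemisimplicialSet)
    (T : (n : ℕ) → ℕ → S.X n → S.X (n + 2)) (hT : Tprops S T)
    (n k : ℕ) (hk : k ≤ n + 1) (x : S.X (n + 1))
    (y : ℕ → S.X (n + 1))
    (hy0 : y 0 = x)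
    (hyl : ∀ j : ℕ, 0 < j → j < k + 1 →
        y j = S.d (n + 1) k (T n (k - 1) (S.d n (j - 1) x)))
    (hyh : ∀ j : ℕ, k + 1 < j → j ≤ n + 2 →
        y j = S.d (n + 1) (k + 1) (T n k (S.d n (j - 1) x))) :
    ∀ i j : ℕ, i < j → j ≤ n + 2 → i ≠ k + 1 → j ≠ k + 1 →
      S.d n i (y j) = S.d n (j - 1) (y i) := by
  obtain ⟨ha, hb, hc, hd⟩ := hT
  intro i j hij hj hik hjk
  rcases Nat.eq_zero_or_pos i with hi0 | hi0
  · subst hi0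
    rw [hy0]
    by_cases hlt : j < k + 1
    · rw [hyl j hij hlt]
      obtain ⟨k', rfl⟩ : ∃ k', k = k' + 1 := ⟨k - 1, by omega⟩
      exact hd n k' (by omega) (S.d n (j - 1) x)
    · rw [hyh j (by omega) hj]
      exact hd n k (by omega) (S.d n (j - 1) x)
  · by_cases hikl : i < k + 1
    · by_cases hjkl : j < k + 1
      · -- subcase A : 1 ≤ i < j ≤ k
        obtain ⟨m, rfl⟩ : ∃ m, n = m + 1 := ⟨n - 1, by omega⟩
        obtain ⟨i', rfl⟩ : ∃ i', i = i' + 1 := ⟨i - 1, by omega⟩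
        obtain ⟨j', rfl⟩ : ∃ j', j = j' + 2 := ⟨j - 2, by omega⟩
        obtain ⟨k', rfl⟩ : ∃ k', k = k' + 2 := ⟨k - 2, by omega⟩
        rw [hyl _ (by omega) hjkl, hyl _ (by omega) hikl]
        have e1 : S.d (m+1) (i'+1) (S.d (m+2) (k'+2) (T (m+1) (k'+1) (S.d (m+1) (j'+1) x)))
            = S.d (m+1) (k'+1) (S.d (m+2) (i'+1) (T (m+1) (k'+1) (S.d (m+1) (j'+1) x))) :=
          S.face_comm (m+1) (i'+1) (k'+2) (by omega) (by omega) _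
        have e2 : S.d (m+1) (j'+1) (S.d (m+2) (k'+2) (T (m+1) (k'+1) (S.d (m+1) (i') x)))
            = S.d (m+1) (k'+1) (S.d (m+2) (j'+1) (T (m+1) (k'+1) (S.d (m+1) (i') x))) :=
          S.face_comm (m+1) (j'+1) (k'+2) (by omega) (by omega) _
        have e3 : S.d (m+2) (i'+1) (T (m+1) (k'+1) (S.d (m+1) (j'+1) x))
            = T m k' (S.d m i' (S.d (m+1) (j'+1) x)) :=
          ha m (i'+1) (k'+1) (by omega) (by omega) (by omega) _
        have e4 : S.d (m+2) (j'+1) (T (m+1) (k'+1) (S.d (m+1) (i') x))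
            = T m k' (S.d m j' (S.d (m+1) (i') x)) :=
          ha m (j'+1) (k'+1) (by omega) (by omega) (by omega) _
        have e5 : S.d m i' (S.d (m+1) (j'+1) x) = S.d m j' (S.d (m+1) i' x) :=
          S.face_comm m i' (j'+1) (by omega) (by omega) x
        show S.d (m+1) (i'+1) (S.d (m+2) (k'+2) (T (m+1) (k'+1) (S.d (m+1) (j'+1) x)))
            = S.d (m+1) (j'+1) (S.d (m+2) (k'+2) (T (m+1) (k'+1) (S.d (m+1) (i') x)))
        rw [e1, e2, e3, e4, e5]
      · -- subcase C : 1 ≤ i ≤ k < k+1 < j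
        obtain ⟨m, rfl⟩ : ∃ m, n = m + 1 := ⟨n - 1, by omega⟩
        obtain ⟨i', rfl⟩ : ∃ i', i = i' + 1 := ⟨i - 1, by omega⟩
        obtain ⟨k', rfl⟩ : ∃ k', k = k' + 1 := ⟨k - 1, by omega⟩
        obtain ⟨j', rfl⟩ : ∃ j', j = j' + 2 := ⟨j - 2, by omega⟩
        rw [hyh _ (by omega) hj, hyl _ (by omega) hikl]
        have e1 : S.d (m+1) (i'+1) (S.d (m+2) (k'+2) (T (m+1) (k'+1) (S.d (m+1) (j'+1) x)))
            = S.d (m+1) (k'+1) (S.d (m+2) (i'+1) (T (m+1) (k'+1) (S.d (m+1) (j'+1) x))) :=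
          S.face_comm (m+1) (i'+1) (k'+2) (by omega) (by omega) _
        have e2 : S.d (m+1) (k'+1) (S.d (m+2) (j'+2) (T (m+1) k' (S.d (m+1) (i') x)))
            = S.d (m+1) (j'+1) (S.d (m+2) (k'+1) (T (m+1) k' (S.d (m+1) (i') x))) :=
          S.face_comm (m+1) (k'+1) (j'+2) (by omega) (by omega) _
        have e3 : S.d (m+2) (i'+1) (T (m+1) (k'+1) (S.d (m+1) (j'+1) x))
            = T m k' (S.d m i' (S.d (m+1) (j'+1) x)) :=
          ha m (i'+1) (k'+1) (by omega) (by omega) (by omega) _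
        have e4 : S.d (m+2) (j'+2) (T (m+1) k' (S.d (m+1) (i') x))
            = T m k' (S.d m j' (S.d (m+1) (i') x)) :=
          hb m (j'+2) k' (by omega) (by omega) _
        have e5 : S.d m i' (S.d (m+1) (j'+1) x) = S.d m j' (S.d (m+1) i' x) :=
          S.face_comm m i' (j'+1) (by omega) (by omega) x
        show S.d (m+1) (i'+1) (S.d (m+2) (k'+2) (T (m+1) (k'+1) (S.d (m+1) (j'+1) x)))
            = S.d (m+1) (j'+1) (S.d (m+2) (k'+1) (T (m+1) k' (S.d (m+1) (i') x)))
        rw [e1, ← e2, e3, e4, e5]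
    · -- subcase B : k+1 < i < j
      obtain ⟨m, rfl⟩ : ∃ m, n = m + 1 := ⟨n - 1, by omega⟩
      obtain ⟨i', rfl⟩ : ∃ i', i = i' + 1 := ⟨i - 1, by omega⟩
      obtain ⟨j', rfl⟩ : ∃ j', j = j' + 2 := ⟨j - 2, by omega⟩
      rw [hyh _ (by omega) hj, hyh _ (by omega) (by omega)]
      have e1 : S.d (m+1) (k+1) (S.d (m+2) (i'+2) (T (m+1) k (S.d (m+1) (j'+1) x)))
          = S.d (m+1) (i'+1) (S.d (m+2) (k+1) (T (m+1) k (S.d (m+1) (j'+1) x))) :=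
        S.face_comm (m+1) (k+1) (i'+2) (by omega) (by omega) _
      have e2 : S.d (m+1) (k+1) (S.d (m+2) (j'+2) (T (m+1) k (S.d (m+1) (i') x)))
          = S.d (m+1) (j'+1) (S.d (m+2) (k+1) (T (m+1) k (S.d (m+1) (i') x))) :=
        S.face_comm (m+1) (k+1) (j'+2) (by omega) (by omega) _
      have e3 : S.d (m+2) (i'+2) (T (m+1) k (S.d (m+1) (j'+1) x))
          = T m k (S.d m i' (S.d (m+1) (j'+1) x)) :=
        hb m (i'+2) k (by omega) (by omega) _
      have e4 : S.d (m+2) (j'+2) (T (m+1) k (S.d (m+1) (i') x))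
          = T m k (S.d m j' (S.d (m+1) (i') x)) :=
        hb m (j'+2) k (by omega) (by omega) _
      have e5 : S.d m i' (S.d (m+1) (j'+1) x) = S.d m j' (S.d (m+1) i' x) :=
        S.face_comm m i' (j'+1) (by omega) (by omega) x
      show S.d (m+1) (i'+1) (S.d (m+2) (k+1) (T (m+1) k (S.d (m+1) (j'+1) x)))
          = S.d (m+1) (j'+1) (S.d (m+2) (k+1) (T (m+1) k (S.d (m+1) (i') x)))
      rw [← e1, ← e2, e3, e4, e5]
end

section
/- Let X be a semisimplicial set equipped with functions T_j : X_n → X_{n+2} (for all n ≥ 0 and 0 ≤ j ≤ n) satisfying: (a) d_i ∘ T_j = T_{j-1} ∘ d_{i-1} whenever 0 < i < j+1; (b) d_i ∘ T_j = T_j ∘ d_{i-2} whenever i > j+2; (c) d_{j+1} ∘ T_j = d_{j+2} ∘ T_j; and (d) d_0(d_{j+1}(T_j x)) = x for all j and x. Fix x ∈ X_n and 0 ≤ k ≤ n, let y_j (for 0 ≤ j ≤ n+1, j ≠ k+1) be defined by y_0 = x, y_j = d_k(T_{k-1}(d_{j-1} x)) for 0 < j < k+1, and y_j = d_{k+1}(T_k(d_{j-1}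 x)) for j > k+1, and let y ∈ X_{n+1} satisfy d_j y = y_j for all j ≠ k+1. For each j with 0 < j ≤ n+2 define z_j ∈ X_{n+1} by: z_j = T_{k-1}(d_{j-1} x) if 0 < j < k+1; z_j = y if j = k+1 or j = k+2; and z_j = T_k(d_{j-2} x) if j > k+2. Then d_i z_j = d_{j-1} z_i whenever 0 < i < j. -/
/-- Lemma 5 of the paper: the prescribed faces `z j` of the second auxiliary horn
are Kan-compatible. -/
theorem second_horn_compatible (S : SemisimplicialSet)
    (T : (n : ℕ) → ℕ → S.X n → S.X (n + 2)) (hT : Tprops S T)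
    (n k : ℕ) (hk : k ≤ n + 1) (x : S.X (n + 1))
    (y : S.X (n + 2))
    (hy0 : S.d (n + 1) 0 y = x)
    (hyl : ∀ j : ℕ, 0 < j → j < k + 1 →
        S.d (n + 1) j y = S.d (n + 1) k (T n (k - 1) (S.d n (j - 1) x)))
    (hyh : ∀ j : ℕ, k + 1 < j → j ≤ n + 2 →
        S.d (n + 1) j y = S.d (n + 1) (k + 1) (T n k (S.d n (j - 1) x)))
    (z : ℕ → S.X (n + 2))
    (hzl : ∀ j : ℕ, 0 < j → j < k + 1 → z j = T n (k - 1) (S.d n (j - 1) x))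
    (hzm1 : z (k + 1) = y) (hzm2 : z (k + 2) = y)
    (hzh : ∀ j : ℕ, k + 2 < j → j ≤ n + 3 → z j = T n k (S.d n (j - 2) x)) :
    ∀ i j : ℕ, 0 < i → i < j → j ≤ n + 3 →
      S.d (n + 1) i (z j) = S.d (n + 1) (j - 1) (z i) := by
  obtain ⟨ha, hb, hc, hd⟩ := hT
  intro i j hi hij hj
  by_cases hjL : j < k + 1
  · -- both i, j in the low range
    obtain ⟨m, rfl⟩ : ∃ m, n = m + 1 := ⟨n - 1, by omega⟩
    show S.d (m + 2) i (z j) = S.d (m + 2) (j - 1) (z i)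
    rw [hzl j (by omega) hjL, hzl i hi (by omega),
      ha m i (k - 1) hi (by omega) (by omega),
      ha m (j - 1) (k - 1) (by omega) (by omega) (by omega),
      S.face_comm m (i - 1) (j - 1) (by omega) (by omega)]
  by_cases hjk1 : j = k + 1
  · -- j = k + 1, so i < k + 1
    subst hjk1
    have e : k + 1 - 1 = k := by omega
    rw [hzm1, hzl i hi (by omega), hyl i hi (by omega), e]
  by_cases hjk2 : j = k + 2
  · -- j = k + 2
    subst hjk2
    have e : k + 2 - 1 = k + 1 := by omega
    rw [hzm2, e]
    by_cases hik : i = k + 1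
    · subst hik; rw [hzm1]
    · have hiL : i < k + 1 := by omega
      rw [hzl i hi hiL, hyl i hi hiL]
      have h := hc n (k - 1) (by omega) (S.d n (i - 1) x)
      have e1 : k - 1 + 1 = k := by omega
      have e2 : k - 1 + 2 = k + 1 := by omega
      rw [e1, e2] at h
      exact h
  · -- j > k + 2
    have hjH : k + 2 < j := by omega
    by_cases hik1 : i = k + 1
    · subst hik1
      rw [hzh j hjH hj, hzm1, hyh (j - 1) (by omega) (by omega)]
      have e : j - 1 - 1 = j - 2 := by omega
      rw [e]
    by_cases hik2 : i = k + 2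
    · subst hik2
      rw [hzh j hjH hj, hzm2, hyh (j - 1) (by omega) (by omega)]
      have e : j - 1 - 1 = j - 2 := by omega
      rw [e]
      exact (hc n k (by omega) (S.d n (j - 2) x)).symm
    by_cases hiL : i < k + 1
    · -- i low, j high
      obtain ⟨m, rfl⟩ : ∃ m, n = m + 1 := ⟨n - 1, by omega⟩
      show S.d (m + 2) i (z j) = S.d (m + 2) (j - 1) (z i)
      rw [hzh j hjH hj, hzl i hi hiL,
        ha m i k hi (by omega) (by omega),
        hb m (j - 1) (k - 1) (by omega) (by omega)]
      have e : j - 1 - 2 = j - 2 - 1 := by omega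
      rw [e, S.face_comm m (i - 1) (j - 2) (by omega) (by omega)]
    · -- both i, j in the high range
      have hiH : k + 2 < i := by omega
      obtain ⟨m, rfl⟩ : ∃ m, n = m + 1 := ⟨n - 1, by omega⟩
      show S.d (m + 2) i (z j) = S.d (m + 2) (j - 1) (z i)
      rw [hzh j hjH hj, hzh i hiH (by omega),
        hb m i k (by omega) (by omega),
        hb m (j - 1) k (by omega) (by omega)]
      have e : j - 1 - 2 = j - 2 - 1 := by omega
      rw [e, S.face_comm m (i - 2) (j - 2) (by omega) (by omega)]
end

section
/- Let X be a semisimplicial set equipped with functions T_j : X_n → X_{n+2} (for all n ≥ 0 and 0 ≤ j ≤ n) satisfying: (a) d_i ∘ T_j = T_{j-1} ∘ d_{i-1} whenever 0 < i < j+1; (b) d_i ∘ T_j = T_j ∘ d_{i-2} whenever i > j+2; (c) d_{j+1} ∘ T_j = d_{j+2} ∘ T_j; and (d) d_0(d_{j+1}(T_j x)) = x for all j and x. Define s_j : X_n → X_{n+1} by s_j x = d_0(T_j x). Then the functions s_j satisfy: (i) d_i ∘ s_j = s_{j-1} ∘ d_i whenever i < j; (ii) d_i(s_j x) = x whenever i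 = j or i = j+1; and (iii) d_i ∘ s_j = s_j ∘ d_{i-1} whenever i > j+1. -/
/-- Defining `s j x = d 0 (T j x)` from operators `T` with properties (a)–(d)
yields operators satisfying the simplicial identities (i)–(iii). -/
theorem degeneracies_from_T (S : SemisimplicialSet)
    (T : (n : ℕ) → ℕ → S.X n → S.X (n + 2)) (hT : Tprops S T)
    (s : (n : ℕ) → ℕ → S.X n → S.X (n + 1))
    (hs : ∀ (n j : ℕ), j ≤ n → ∀ x : S.X n, s n j x = S.d (n + 1) 0 (T n j x)) :
    (∀ (n i j : ℕ), i < j → j ≤ n + 1 → ∀ x : S.X (n + 1),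
        S.d (n + 1) i (s (n + 1) j x) = s n (j - 1) (S.d n i x)) ∧
    (∀ (n j : ℕ), j ≤ n → ∀ x : S.X n,
        S.d n j (s n j x) = x ∧ S.d n (j + 1) (s n j x) = x) ∧
    (∀ (n i j : ℕ), j + 1 < i → i ≤ n + 2 → ∀ x : S.X (n + 1),
        S.d (n + 1) i (s (n + 1) j x) = s n j (S.d n (i - 1) x)) := by
  obtain ⟨ha, hb, hc, hd⟩ := hT
  refine ⟨?_, ?_, ?_⟩
  · intro n i j hij hj x
    have h1 : j - 1 ≤ n := by omega
    have hij1 : 1 ≤ j := by omega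
    rw [hs (n+1) j hj x, hs n (j-1) h1]
    have hcomm := S.face_comm (n+1) 0 (i+1) (by omega) (by omega) (T (n+1) j x)
    simp only [Nat.add_sub_cancel] at hcomm
    rw [← hcomm, ha n (i+1) j (by omega) (by omega) (by omega) x,
      Nat.add_sub_cancel]
  · intro n j hj x
    rw [hs n j hj x]
    constructor
    · have hcomm := S.face_comm n 0 (j+1) (by omega) (by omega) (T n j x)
      simp only [Nat.add_sub_cancel] at hcomm
      rw [← hcomm, hd n j hj x]
    · have hcomm := S.face_comm n 0 (j+2) (by omega) (by omega) (T n j x)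
      simp only [Nat.add_sub_cancel, show j+2-1 = j+1 by omega] at hcomm
      rw [← hcomm, ← hc n j hj x, hd n j hj x]
  · intro n i j hij hi x
    have hjn : j ≤ n := by omega
    rw [hs (n+1) j (by omega) x, hs n j hjn]
    have hcomm := S.face_comm (n+1) 0 (i+1) (by omega) (by omega) (T (n+1) j x)
    simp only [Nat.add_sub_cancel] at hcomm
    rw [← hcomm, hb n (i+1) j (by omega) (by omega) x,
      show i+1-2 = i-1 by omega]
end

section
/- Let ℓ ≥ 1 and let X be an ℓ-fold multisemisimplicial set equipped with functions T^q_j : X_𝐧 → X_{𝐧+2𝐞_q} (for all multi-indices 𝐧, 1 ≤ q ≤ ℓ, 0 ≤ j ≤ n_q) satisfying: (a) d^q_i ∘ T^q_j = T^q_{j-1} ∘ d^q_{i-1} whenever 0 < i < j+1; (b) d^q_i ∘ T^q_j = T^q_j ∘ d^q_{i-2} whenever i > j+2; (c) d^q_{j+1} ∘ T^q_j = d^q_{j+2} ∘ T^q_j; (d) d^q_0(d^q_{j+1}(T^q_j x)) = x; and (e) d^p_i ∘ T^q_j = T^q_j ∘ d^p_i whenever p ≠ q. Define s^q_j : X_𝐧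 → X_{𝐧+𝐞_q} by s^q_j x = d^q_0(T^q_j x). Then: (i) d^q_i ∘ s^q_j = s^q_{j-1} ∘ d^q_i whenever i < j; (ii) d^q_i(s^q_j x) = x whenever i = j or i = j+1; (iii) d^q_i ∘ s^q_j = s^q_j ∘ d^q_{i-1} whenever i > j+1; and (iv) d^p_i ∘ s^q_j = s^q_j ∘ d^p_i whenever p ≠ q. -/
/-- The multi-index with `1` in position `p` and `0` elsewhere. -/
def uv {ℓ : ℕ} (p : Fin ℓ) : Fin ℓ → ℕ := Pi.single p 1

lemma uv_apply {ℓ : ℕ} (p t : Fin ℓ) : uv p t = if t = p then 1 else 0 := by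
  simp [uv, Pi.single_apply]

lemma sub_sub_comm' {ℓ : ℕ} (m a b : Fin ℓ → ℕ) : m - a - b = m - b - a := by
  funext t; simp only [Pi.sub_apply]; omega

lemma sub_sub_sub_comm' {ℓ : ℕ} (m a b : Fin ℓ → ℕ) : m - a - a - b = m - b - a - a := by
  funext t; simp only [Pi.sub_apply]; omega

lemma addsub1 {ℓ : ℕ} (m : Fin ℓ → ℕ) (r q : Fin ℓ) (h : q ≠ r) :
    (m - uv r) - uv q = ((m + uv r) - uv q) - uv r - uv r := by
  funext t
  simp only [Pi.sub_apply, Pi.add_apply, uv_apply]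
  by_cases h1 : t = r <;> by_cases h2 : t = q <;> simp_all <;> omega

lemma addsub2 {ℓ : ℕ} (m : Fin ℓ → ℕ) (r q : Fin ℓ) (h : q ≠ r) :
    ((m + uv r) - uv q) - uv r = m - uv q := by
  funext t
  simp only [Pi.sub_apply, Pi.add_apply, uv_apply]
  by_cases h1 : t = r <;> by_cases h2 : t = q <;> simp_all <;> omega

/-- An `ℓ`-fold multisemisimplicial set: sets `X 𝐧` indexed by multi-indices,
with face maps `d m p i : X m → X (m - 𝐞 p)` (meaningful for `1 ≤ m p` and
`0 ≤ i ≤ m p`) satisfying the semisimplicial identities. -/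
structure MultiSemisimplicialSet (ℓ : ℕ) where
  X : (Fin ℓ → ℕ) → Type
  d : (m : Fin ℓ → ℕ) → (p : Fin ℓ) → ℕ → X m → X (m - uv p)
  face_comm_same : ∀ (m : Fin ℓ → ℕ) (p : Fin ℓ) (i j : ℕ), i < j → j ≤ m p → 2 ≤ m p →
    ∀ x : X m, d (m - uv p) p i (d m p j x) = d (m - uv p) p (j - 1) (d m p i x)
  face_comm_mixed : ∀ (m : Fin ℓ → ℕ) (p q : Fin ℓ), p ≠ q →
    ∀ i j : ℕ, 1 ≤ m p → 1 ≤ m q → i ≤ m p → j ≤ m q → ∀ x : X m,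
      d (m - uv q) p i (d m q j x) =
        cast (congrArg X (sub_sub_comm' m (uv p) (uv q))) (d (m - uv p) q j (d m p i x))

/-- The Kan condition for multisemisimplicial sets: every compatible family of
faces of a potential filler of degree `m`, given for all valid `(p, i) ≠ (r, k)`,
can be filled. -/
def MultiSemisimplicialSet.Kan {ℓ : ℕ} (S : MultiSemisimplicialSet ℓ) : Prop :=
  ∀ (m : Fin ℓ → ℕ) (r : Fin ℓ) (k : ℕ), 1 ≤ m r → k ≤ m r →
    ∀ x : (p : Fin ℓ) → ℕ → S.X (m - uv p),
      (∀ (p : Fin ℓ) (i j : ℕ), i < j → j ≤ m p → 2 ≤ m p →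
          ¬(p = r ∧ i = k) → ¬(p = r ∧ j = k) →
          S.d (m - uv p) p i (x p j) = S.d (m - uv p) p (j - 1) (x p i)) →
      (∀ (p q : Fin ℓ) (i j : ℕ), p ≠ q → 1 ≤ m p → 1 ≤ m q → i ≤ m p → j ≤ m q →
          ¬(p = r ∧ i = k) → ¬(q = r ∧ j = k) →
          S.d (m - uv q) p i (x q j) =
            cast (congrArg S.X (sub_sub_comm' m (uv p) (uv q))) (S.d (m - uv p) q j (x p i))) →
      ∃ z : S.X m, ∀ (p : Fin ℓ) (i : ℕ), 1 ≤ m p → i ≤ m p → ¬(p = r ∧ i = k) →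
        S.d m p i z = x p i

/-- Properties (a)–(e) of the auxiliary operators `T m q j : X (𝐧) → X (𝐧 + 2𝐞 q)`
(written with top degree `m = 𝐧 + 2𝐞 q`). -/
def MTprops {ℓ : ℕ} (S : MultiSemisimplicialSet ℓ)
    (T : (m : Fin ℓ → ℕ) → (q : Fin ℓ) → ℕ → S.X ((m - uv q) - uv q) → S.X m) : Prop :=
  (∀ (m : Fin ℓ → ℕ) (q : Fin ℓ) (i j : ℕ), 0 < i → i < j + 1 → j + 2 ≤ m q →
      ∀ x : S.X ((m - uv q) - uv q),
        S.d m q i (T m q j x) =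
          T (m - uv q) q (j - 1) (S.d ((m - uv q) - uv q) q (i - 1) x)) ∧
  (∀ (m : Fin ℓ → ℕ) (q : Fin ℓ) (i j : ℕ), j + 2 < i → i ≤ m q →
      ∀ x : S.X ((m - uv q) - uv q),
        S.d m q i (T m q j x) = T (m - uv q) q j (S.d ((m - uv q) - uv q) q (i - 2) x)) ∧
  (∀ (m : Fin ℓ → ℕ) (q : Fin ℓ) (j : ℕ), j + 2 ≤ m q → ∀ x : S.X ((m - uv q) - uv q),
      S.d m q (j + 1) (T m q j x) = S.d m q (j + 2) (T m q j x)) ∧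
  (∀ (m : Fin ℓ → ℕ) (q : Fin ℓ) (j : ℕ), j + 2 ≤ m q → ∀ x : S.X ((m - uv q) - uv q),
      S.d (m - uv q) q 0 (S.d m q (j + 1) (T m q j x)) = x) ∧
  (∀ (m : Fin ℓ → ℕ) (p q : Fin ℓ) (i j : ℕ), p ≠ q → 1 ≤ m p → i ≤ m p → j + 2 ≤ m q →
      ∀ x : S.X ((m - uv q) - uv q),
        S.d m p i (T m q j x) =
          T (m - uv p) q j
            (cast (congrArg S.X (sub_sub_sub_comm' m (uv q) (uv p)))
              (S.d ((m - uv q) - uv q) p i x)))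

lemma cast_s_cast {ℓ : ℕ} (S : MultiSemisimplicialSet ℓ)
    (s : (m : Fin ℓ → ℕ) → (q : Fin ℓ) → ℕ → S.X (m - uv q) → S.X m)
    (A B : Fin ℓ → ℕ) (h : A = B) (q : Fin ℓ) (j : ℕ)
    (C : Fin ℓ → ℕ) (e2 : S.X C = S.X (A - uv q)) (e3 : S.X C = S.X (B - uv q))
    (e1 : S.X A = S.X B) (D : S.X C) :
    cast e1 (s A q j (cast e2 D)) = s B q j (cast e3 D) := by
  subst h; rfl

/-- Defining `s q j x = d q 0 (T q j x)` from operators `T` with properties (a)–(e)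
yields operators satisfying identities (i)–(iii) and the mixed face identity. -/
theorem multi_degeneracies_from_T (ℓ : ℕ) (hl : 1 ≤ ℓ)
    (S : MultiSemisimplicialSet ℓ)
    (T : (m : Fin ℓ → ℕ) → (q : Fin ℓ) → ℕ → S.X ((m - uv q) - uv q) → S.X m)
    (hT : MTprops S T)
    (s : (m : Fin ℓ → ℕ) → (q : Fin ℓ) → ℕ → S.X (m - uv q) → S.X m)
    (hs : ∀ (m : Fin ℓ → ℕ) (q : Fin ℓ) (j : ℕ), j + 2 ≤ m q →
        ∀ x : S.X ((m - uv q) - uv q), s (m - uv q) q j x = S.d m q 0 (T m q j x)) :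
    (∀ (m : Fin ℓ → ℕ) (q : Fin ℓ) (i j : ℕ), i < j → j + 1 ≤ m q →
      ∀ x : S.X (m - uv q),
        S.d m q i (s m q j x) = s (m - uv q) q (j - 1) (S.d (m - uv q) q i x)) ∧
    (∀ (m : Fin ℓ → ℕ) (q : Fin ℓ) (j : ℕ), j + 1 ≤ m q → ∀ x : S.X (m - uv q),
        S.d m q j (s m q j x) = x ∧ S.d m q (j + 1) (s m q j x) = x) ∧
    (∀ (m : Fin ℓ → ℕ) (q : Fin ℓ) (i j : ℕ), j + 1 < i → i ≤ m q →
      ∀ x : S.X (m - uv q),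
        S.d m q i (s m q j x) = s (m - uv q) q j (S.d (m - uv q) q (i - 1) x)) ∧
    (∀ (m : Fin ℓ → ℕ) (p q : Fin ℓ) (i j : ℕ), p ≠ q → 1 ≤ m p → i ≤ m p → j + 1 ≤ m q →
      ∀ x : S.X (m - uv q),
        S.d m p i (s m q j x) =
          s (m - uv p) q j
            (cast (congrArg S.X (sub_sub_comm' m (uv q) (uv p))) (S.d (m - uv q) p i x))) := by

  obtain ⟨ha, hb, hc, hd, he⟩ := hT
  refine ⟨?_, ?_, ?_, ?_⟩
  · intro m q i j hij h x
    obtain ⟨M, rfl⟩ : ∃ M, M - uv q = m :=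
      ⟨m + uv q, by funext t; simp only [Pi.sub_apply, Pi.add_apply, uv_apply]; split <;> omega⟩
    have hMq : j + 2 ≤ M q := by
      simp [Pi.sub_apply, uv_apply] at h; omega
    rw [hs M q j hMq x]
    have h1 := S.face_comm_same M q 0 (i + 1) (Nat.succ_pos i) (by omega) (by omega) (T M q j x)
    simp only [Nat.add_sub_cancel] at h1
    rw [← h1, ha M q (i + 1) j (Nat.succ_pos i) (by omega) hMq x]
    simp only [Nat.add_sub_cancel]
    rw [hs (M - uv q) q (j - 1)
      (by simp [Pi.sub_apply, uv_apply]; omega)]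
  · intro m q j h x
    obtain ⟨M, rfl⟩ : ∃ M, M - uv q = m :=
      ⟨m + uv q, by funext t; simp only [Pi.sub_apply, Pi.add_apply, uv_apply]; split <;> omega⟩
    have hMq : j + 2 ≤ M q := by
      simp [Pi.sub_apply, uv_apply] at h; omega
    rw [hs M q j hMq x]
    constructor
    · have h1 := S.face_comm_same M q 0 (j + 1) (Nat.succ_pos j) (by omega) (by omega) (T M q j x)
      simp only [Nat.add_sub_cancel] at h1
      rw [← h1, hd M q j hMq x]
    · have h1 := S.face_comm_same M q 0 (j + 2) (by omega) (by omega) (by omega) (T M q j x)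
      simp only [show j + 2 - 1 = j + 1 from by omega] at h1
      rw [← h1, ← hc M q j hMq x, hd M q j hMq x]
  · intro m q i j hij h x
    obtain ⟨M, rfl⟩ : ∃ M, M - uv q = m :=
      ⟨m + uv q, by funext t; simp only [Pi.sub_apply, Pi.add_apply, uv_apply]; split <;> omega⟩
    have hMq : i + 1 ≤ M q := by
      simp [Pi.sub_apply, uv_apply] at h; omega
    rw [hs M q j (by omega) x]
    have h1 := S.face_comm_same M q 0 (i + 1) (by omega) (by omega) (by omega) (T M q j x)
    simp only [Nat.add_sub_cancel] at h1
    rw [← h1, hb M q (i + 1) j (by omega) (by omega) x]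
    simp only [show i + 1 - 2 = i - 1 from by omega]
    rw [hs (M - uv q) q j
      (by simp [Pi.sub_apply, uv_apply]; omega)]
  · intro m p q i j hpq hp hi h x
    obtain ⟨M, rfl⟩ : ∃ M, M - uv q = m :=
      ⟨m + uv q, by funext t; simp only [Pi.sub_apply, Pi.add_apply, uv_apply]; split <;> omega⟩
    have hMq : j + 2 ≤ M q := by
      simp [Pi.sub_apply, uv_apply] at h; omega
    have hMp : 1 ≤ M p ∧ i ≤ M p := by
      simp [Pi.sub_apply, uv_apply, hpq] at hp hi; omega
    rw [hs M q j hMq x]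
    rw [S.face_comm_mixed M p q hpq i 0 hMp.1 (by omega) hMp.2 (by omega) (T M q j x)]
    rw [he M p q i j hpq hMp.1 hMp.2 hMq x]
    rw [← hs (M - uv p) q j
      (by simp [Pi.sub_apply, uv_apply, Ne.symm hpq]; omega)]
    exact cast_s_cast S s _ _ (sub_sub_comm' M (uv p) (uv q)) q j _ _ _ _ _
end

section
/- Let ℓ ≥ 1 and let X be an ℓ-fold multisemisimplicial set equipped with functions T^q_j : X_𝐧 → X_{𝐧+2𝐞_q} (for all multi-indices 𝐧, 1 ≤ q ≤ ℓ, 0 ≤ j ≤ n_q) satisfying: (a) d^q_i ∘ T^q_j = T^q_{j-1} ∘ d^q_{i-1} whenever 0 < i < j+1; (b) d^q_i ∘ T^q_j = T^q_j ∘ d^q_{i-2} whenever i > j+2; (c) d^q_{j+1} ∘ T^q_j = d^q_{j+2} ∘ T^q_j; (d) d^q_0(d^q_{j+1}(T^q_j x)) = x; and (e) d^p_i ∘ T^q_j = T^q_j ∘ d^p_i whenever p ≠ q. Fix x ∈ X_𝐧, an index r with 1 ≤ r ≤ ℓ, and k with 0 ≤ k ≤ n_r. For each pair (q,j) ≠ (r,k+1)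 with 0 ≤ j ≤ n_q + (1 if q = r else 0), define y^q_j by: y^r_0 = x; y^r_j = d^r_k(T^r_{k-1}(d^r_{j-1} x)) if 0 < j < k+1; y^r_j = d^r_{k+1}(T^r_k(d^r_{j-1} x)) if j > k+1; and y^q_j = d^r_{k+1}(T^r_k(d^q_j x)) if q ≠ r. Then the family (y^q_j) satisfies the Kan compatibility relations: d^q_i y^q_j = d^q_{j-1} y^q_i for i < j with (q,i) ≠ (r,k+1) ≠ (q,j), and d^p_i y^q_j = d^q_j y^p_i for p ≠ q with (p,i) ≠ (r,k+1) ≠ (q,j). -/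
lemma d_congr {ℓ : ℕ} (S : MultiSemisimplicialSet ℓ) {m1 m2 : Fin ℓ → ℕ} (h : m1 = m2)
    (q : Fin ℓ) (j : ℕ) {w1 : S.X m1} {w2 : S.X m2} (hw : HEq w1 w2) :
    HEq (S.d m1 q j w1) (S.d m2 q j w2) := by
  subst h; rw [eq_of_heq hw]

lemma T_congr {ℓ : ℕ} {S : MultiSemisimplicialSet ℓ}
    (T : (m : Fin ℓ → ℕ) → (q : Fin ℓ) → ℕ → S.X ((m - uv q) - uv q) → S.X m)
    {m1 m2 : Fin ℓ → ℕ} (h : m1 = m2) (q : Fin ℓ) (j : ℕ)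
    {w1 : S.X ((m1 - uv q) - uv q)} {w2 : S.X ((m2 - uv q) - uv q)} (hw : HEq w1 w2) :
    HEq (T m1 q j w1) (T m2 q j w2) := by
  subst h; rw [eq_of_heq hw]

/-- The multisemisimplicial analogue of Lemma 4: the prescribed faces `y q j` of the
first auxiliary horn (with missing face `(r, k+1)`, filler degree `m = 𝐧 + 𝐞 r`)
are Kan-compatible. -/
theorem multi_first_horn_compatible (ℓ : ℕ) (hl : 1 ≤ ℓ)
    (S : MultiSemisimplicialSet ℓ)
    (T : (m : Fin ℓ → ℕ) → (q : Fin ℓ) → ℕ → S.X ((m - uv q) - uv q) → S.X m)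
    (hT : MTprops S T)
    (m : Fin ℓ → ℕ) (r : Fin ℓ) (k : ℕ) (hk : k + 1 ≤ m r)
    (x : S.X (m - uv r))
    (y : (q : Fin ℓ) → ℕ → S.X (m - uv q))
    (hy0 : y r 0 = x)
    (hyl : ∀ j : ℕ, 0 < j → j < k + 1 →
        y r j = S.d m r k (T m r (k - 1) (S.d (m - uv r) r (j - 1) x)))
    (hyh : ∀ j : ℕ, k + 1 < j → j ≤ m r →
        y r j = S.d m r (k + 1) (T m r k (S.d (m - uv r) r (j - 1) x)))
    (hyq : ∀ (q : Fin ℓ) (j : ℕ) (hqr : q ≠ r), 1 ≤ m q → j ≤ m q →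
        y q j = cast (congrArg S.X (addsub2 m r q hqr))
          (S.d ((m + uv r) - uv q) r (k + 1)
            (T ((m + uv r) - uv q) r k
              (cast (congrArg S.X (addsub1 m r q hqr)) (S.d (m - uv r) q j x))))) :
    (∀ (p : Fin ℓ) (i j : ℕ), i < j → j ≤ m p → 2 ≤ m p →
        ¬(p = r ∧ i = k + 1) → ¬(p = r ∧ j = k + 1) →
        S.d (m - uv p) p i (y p j) = S.d (m - uv p) p (j - 1) (y p i)) ∧
    (∀ (p q : Fin ℓ) (i j : ℕ), p ≠ q → 1 ≤ m p → 1 ≤ m q → i ≤ m p → j ≤ m q →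
        ¬(p = r ∧ i = k + 1) → ¬(q = r ∧ j = k + 1) →
        S.d (m - uv q) p i (y q j) =
          cast (congrArg S.X (sub_sub_comm' m (uv p) (uv q))) (S.d (m - uv p) q j (y p i))) := by

  obtain ⟨hTa, hTb, hTc, hTd, hTe⟩ := hT
  have hmr : (m + uv r) r = m r + 1 := by simp [Pi.add_apply, uv_apply]
  have hmq : ∀ q : Fin ℓ, q ≠ r → (m + uv r) q = m q := by
    intro q hq; simp [Pi.add_apply, uv_apply, hq]
  have hsub : (m + uv r) - uv r = m := by
    funext t; simp only [Pi.sub_apply, Pi.add_apply]; omega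
  have hsub2 : (m + uv r) - uv r - uv r = m - uv r := by
    funext t; simp only [Pi.sub_apply, Pi.add_apply]; omega
  set x' : S.X ((m + uv r) - uv r - uv r) := cast (congrArg S.X hsub2.symm) x with hx'def
  have hx' : HEq x' x := cast_heq _ _
  set w : S.X ((m + uv r) - uv r) := S.d (m + uv r) r (k+1) (T (m + uv r) r k x') with hwdef
  set z : S.X m := cast (congrArg S.X hsub) w with hzdef
  have hz : HEq z w := cast_heq _ _
  have y_eq : ∀ (q : Fin ℓ) (j : ℕ), 1 ≤ m q → j ≤ m q → ¬(q = r ∧ j = k + 1) →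
      y q j = S.d m q j z := by
    intro q j h1 h2 h3
    by_cases hqr : q = r
    · subst hqr
      rcases Nat.lt_trichotomy j (k+1) with hj | hj | hj
      · rcases Nat.eq_zero_or_pos j with h0 | h0
        · subst h0
          rw [hy0]
          have e1 : HEq (S.d m q 0 z) (S.d ((m + uv q) - uv q) q 0 w) :=
            d_congr S hsub.symm q 0 hz
          have e2 : S.d ((m + uv q) - uv q) q 0 w = x' :=
            hTd (m + uv q) q k (by omega) x'
          exact (((e1.trans (heq_of_eq e2)).trans hx').symm).eq
        · rw [hyl j h0 hj]
          have e1 : HEq (S.d m q j z) (S.d ((m + uv q) - uv q) q j w) :=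
            d_congr S hsub.symm q j hz
          have e2 : S.d ((m + uv q) - uv q) q j w =
              S.d ((m + uv q) - uv q) q k (S.d (m + uv q) q j (T (m + uv q) q k x')) := by
            have := S.face_comm_same (m + uv q) q j (k+1) hj (by omega) (by omega)
              (T (m + uv q) q k x')
            simpa using this
          have e3 : S.d (m + uv q) q j (T (m + uv q) q k x') =
              T ((m + uv q) - uv q) q (k-1)
                (S.d ((m + uv q) - uv q - uv q) q (j-1) x') :=
            hTa (m + uv q) q j k h0 hj (by omega) x'
          rw [e3] at e2
          have e4 : HEq
              (S.d ((m + uv q) - uv q) q k (T ((m + uv q) - uv q) q (k-1)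
                (S.d ((m + uv q) - uv q - uv q) q (j-1) x')))
              (S.d m q k (T m q (k-1) (S.d (m - uv q) q (j-1) x))) :=
            d_congr S hsub q k (T_congr T hsub q (k-1) (d_congr S hsub2 q (j-1) hx'))
          exact (((e1.trans (heq_of_eq e2)).trans e4).symm).eq
      · exact absurd ⟨rfl, hj⟩ h3
      · rw [hyh j hj h2]
        have e1 : HEq (S.d m q j z) (S.d ((m + uv q) - uv q) q j w) :=
          d_congr S hsub.symm q j hz
        have e2 : S.d ((m + uv q) - uv q) q j w =
            S.d ((m + uv q) - uv q) q (k+1)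
              (S.d (m + uv q) q (j+1) (T (m + uv q) q k x')) := by
          have := S.face_comm_same (m + uv q) q (k+1) (j+1) (by omega) (by omega) (by omega)
            (T (m + uv q) q k x')
          simpa using this.symm
        have e3 : S.d (m + uv q) q (j+1) (T (m + uv q) q k x') =
            T ((m + uv q) - uv q) q k
              (S.d ((m + uv q) - uv q - uv q) q (j+1-2) x') :=
          hTb (m + uv q) q (j+1) k (by omega) (by omega) x'
        rw [e3] at e2
        have ej : j + 1 - 2 = j - 1 := by omega
        rw [ej] at e2
        have e4 : HEq
            (S.d ((m + uv q) - uv q) q (k+1) (T ((m + uv q) - uv q) q k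
              (S.d ((m + uv q) - uv q - uv q) q (j-1) x')))
            (S.d m q (k+1) (T m q k (S.d (m - uv q) q (j-1) x))) :=
          d_congr S hsub q (k+1) (T_congr T hsub q k (d_congr S hsub2 q (j-1) hx'))
        exact (((e1.trans (heq_of_eq e2)).trans e4).symm).eq
    · rw [hyq q j hqr h1 h2]
      have e1 : HEq (S.d m q j z) (S.d ((m + uv r) - uv r) q j w) :=
        d_congr S hsub.symm q j hz
      have e2 : S.d ((m + uv r) - uv r) q j (S.d (m + uv r) r (k+1) (T (m + uv r) r k x')) =
          cast (congrArg S.X (sub_sub_comm' (m + uv r) (uv q) (uv r)))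
            (S.d ((m + uv r) - uv q) r (k+1)
              (S.d (m + uv r) q j (T (m + uv r) r k x'))) :=
        S.face_comm_mixed (m + uv r) q r hqr j (k+1)
          (by rw [hmq q hqr]; omega) (by omega) (by rw [hmq q hqr]; omega) (by omega)
          (T (m + uv r) r k x')
      have e3 : S.d (m + uv r) q j (T (m + uv r) r k x') =
          T ((m + uv r) - uv q) r k
            (cast (congrArg S.X (sub_sub_sub_comm' (m + uv r) (uv r) (uv q)))
              (S.d ((m + uv r) - uv r - uv r) q j x')) :=
        hTe (m + uv r) q r j k hqr (by rw [hmq q hqr]; omega) (by rw [hmq q hqr]; omega)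
          (by omega) x'
      rw [e3] at e2
      have e2' : HEq (S.d ((m + uv r) - uv r) q j w)
          (S.d ((m + uv r) - uv q) r (k+1)
            (T ((m + uv r) - uv q) r k
              (cast (congrArg S.X (sub_sub_sub_comm' (m + uv r) (uv r) (uv q)))
                (S.d ((m + uv r) - uv r - uv r) q j x')))) :=
        (heq_of_eq e2).trans (cast_heq _ _)
      have e4 : HEq
          (S.d ((m + uv r) - uv q) r (k+1)
            (T ((m + uv r) - uv q) r k
              (cast (congrArg S.X (sub_sub_sub_comm' (m + uv r) (uv r) (uv q)))
                (S.d ((m + uv r) - uv r - uv r) q j x'))))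
          (cast (congrArg S.X (addsub2 m r q hqr))
            (S.d ((m + uv r) - uv q) r (k+1)
              (T ((m + uv r) - uv q) r k
                (cast (congrArg S.X (addsub1 m r q hqr)) (S.d (m - uv r) q j x))))) := by
      -- both sides: drop outer cast, congr through d and T, inner casts both HEq to
      -- the two (HEq-equal) underlying face elements
        refine HEq.trans ?_ (cast_heq _ _).symm
        refine d_congr S rfl r (k+1) ?_
        refine T_congr T rfl r k ?_
        refine HEq.trans (cast_heq _ _) (HEq.trans ?_ (cast_heq _ _).symm)
        exact d_congr S hsub2 q j hx'
      exact (((e1.trans e2').trans e4).symm).eq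
  refine ⟨?_, ?_⟩
  · intro p i j hij hjm h2m hi hj
    rw [y_eq p j (by omega) hjm hj, y_eq p i (by omega) (by omega) hi]
    exact S.face_comm_same m p i j hij hjm h2m z
  · intro p q i j hpq h1p h1q him hjm hi hj
    rw [y_eq q j h1q hjm hj, y_eq p i h1p him hi]
    exact S.face_comm_mixed m p q hpq i j h1p h1q him hjm z
end
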